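/- arXiv:1511.02962 — 2 statements merged into one kernel-verified Lean document; each statement's English description precedes it below -/
import Mathlib

section
/- Let Y₁, Y₂, ... be i.i.d. with mean μ, variance σ² > 0, and E|Y|^{2k+1} < ∞. Let Zₙ = √n(Ȳₙ - μ)/σ. Then √n · E[Zₙ^{2k+1}] → k(2k+1)(2k-1)!! μ₃ / (3σ³) as n → ∞, where μ₃ = E[(Y-μ)³]. In particular E[Zₙ^{2k+1}] = O(n^{-1/2}). -/
open MeasureTheory ProbabilityTheory Filter Finset ENNReal

private lemma aux_pow_div (j d : ℕ) :
    Tendsto (fun i : ℕ => (i : ℝ) ^ j / (i : ℝ) ^ (j + d)) atTop (nhds ((0 : ℝ) ^ d)) := by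
  apply Tendsto.congr' _ (tendsto_inv_atTop_nhds_zero_nat.pow d)
  filter_upwards [Filter.eventually_ge_atTop 1] with i hi
  have hi0 : (i : ℝ) ≠ 0 := by positivity
  rw [pow_add, inv_pow]
  field_simp

private lemma stolz {a : ℕ → ℝ} {q : ℕ} (hq : 1 ≤ q) {α : ℝ}
    (h : Tendsto (fun n : ℕ => (a (n + 1) - a n) / (n : ℝ) ^ (q - 1)) atTop (nhds α)) :
    Tendsto (fun n : ℕ => a n / (n : ℝ) ^ q) atTop (nhds (α / q)) := by
  have hq0 : (q : ℝ) ≠ 0 := by positivity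
  set g : ℕ → ℝ := fun i => ((i : ℝ) + 1) ^ q - (i : ℝ) ^ q with hgdef
  have hgpos : ∀ i : ℕ, 0 < g i := by
    intro i
    have : (i : ℝ) ^ q < ((i : ℝ) + 1) ^ q :=
      pow_lt_pow_left₀ (lt_add_one _) (Nat.cast_nonneg _) (by omega)
    simpa [hgdef, sub_pos] using this
  have hsumg : ∀ n : ℕ, ∑ i ∈ range n, g i = (n : ℝ) ^ q := by
    intro n
    have := Finset.sum_range_sub (fun i : ℕ => (i : ℝ) ^ q) n
    simp only [Nat.cast_add, Nat.cast_one] at this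
    rw [hgdef]
    simp only [this]
    rw [Nat.cast_zero, zero_pow (by omega), sub_zero]
  -- ratio limit : g i / i^(q-1) → q
  have hgr : Tendsto (fun i : ℕ => g i / (i : ℝ) ^ (q - 1)) atTop (nhds q) := by
    have hexp : ∀ i : ℕ, g i = ∑ j ∈ range q, (i : ℝ) ^ j * (q.choose j : ℝ) := by
      intro i
      have hb := add_pow (i : ℝ) 1 q
      simp only [one_pow, mul_one] at hb
      rw [Finset.sum_range_succ, Nat.choose_self, Nat.cast_one, mul_one] at hb
      simp [hgdef, hb]
    have hlim : Tendsto (fun i : ℕ => ∑ j ∈ range q,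
        (q.choose j : ℝ) * ((i : ℝ) ^ j / (i : ℝ) ^ (q - 1))) atTop
        (nhds (∑ j ∈ range q, (q.choose j : ℝ) * (0 : ℝ) ^ (q - 1 - j))) := by
      apply tendsto_finset_sum
      intro j hj
      have hjle : j ≤ q - 1 := by simp at hj; omega
      have heq : j + (q - 1 - j) = q - 1 := by omega
      have h2 := aux_pow_div j (q - 1 - j)
      rw [heq] at h2
      exact tendsto_const_nhds.mul h2
    have hval : (∑ j ∈ range q, (q.choose j : ℝ) * (0 : ℝ) ^ (q - 1 - j)) = q := by
      rw [Finset.sum_eq_single (q - 1)]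
      · have : q - 1 - (q - 1) = 0 := by omega
        rw [this, pow_zero, mul_one]
        have h1 : q - (q-1) = 1 := by omega
        have hcq := Nat.choose_symm (show q - 1 ≤ q by omega)
        rw [h1, Nat.choose_one_right] at hcq
        rw [← hcq]
      · intro j hj hne
        have : q - 1 - j ≠ 0 := by simp at hj; omega
        simp [zero_pow this]
      · intro h; simp at h; omega
    rw [← hval]
    apply hlim.congr'
    filter_upwards with i
    rw [hexp, Finset.sum_div]
    congr 1; ext j; ring
  have hgne : ∀ i : ℕ, g i ≠ 0 := fun i => (hgpos i).ne'
  -- limit of (a (i+1) - a i) / g i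
  have hx : Tendsto (fun i : ℕ => (a (i + 1) - a i) / g i) atTop (nhds (α / q)) := by
    have hinv : Tendsto (fun i : ℕ => (i : ℝ) ^ (q - 1) / g i) atTop (nhds ((q : ℝ))⁻¹) := by
      have := hgr.inv₀ hq0
      apply this.congr'
      filter_upwards with i
      rw [inv_div]
    have := h.mul hinv
    rw [div_eq_mul_inv α]
    apply this.congr'
    filter_upwards [Filter.eventually_ge_atTop 1] with i hi
    have hi0 : (i : ℝ) ^ (q - 1) ≠ 0 := by positivity
    field_simp
  -- little-o
  set f : ℕ → ℝ := fun i => (a (i + 1) - a i) - (α / q) * g i with hfdef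
  have hfo : f =o[atTop] g := by
    rw [Asymptotics.isLittleO_iff_tendsto' (by filter_upwards with i hi; exact absurd hi (hgne i))]
    have : Tendsto (fun i : ℕ => (a (i + 1) - a i) / g i - α / q) atTop (nhds (α / q - α / q)) :=
      hx.sub_const _
    rw [sub_self] at this
    apply this.congr
    intro i
    simp only [hfdef]
    rw [eq_div_iff (hgne i), sub_mul, div_mul_cancel₀ _ (hgne i)]
  have htop : Tendsto (fun n : ℕ => ∑ i ∈ range n, g i) atTop atTop := by
    simp only [hsumg]
    exact (tendsto_pow_atTop (show q ≠ 0 by omega)).comp tendsto_natCast_atTop_atTop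
  have hsumo := hfo.sum_range (fun i => (hgpos i).le) htop
  simp only [hsumg] at hsumo
  have hsf : ∀ n : ℕ, ∑ i ∈ range n, f i = a n - a 0 - (α / q) * (n : ℝ) ^ q := by
    intro n
    rw [hfdef]
    rw [Finset.sum_sub_distrib, Finset.sum_range_sub, ← Finset.mul_sum, hsumg]
  have h0 := hsumo.tendsto_div_nhds_zero
  simp only [hsf] at h0
  have ha0 : Tendsto (fun n : ℕ => a 0 / (n : ℝ) ^ q) atTop (nhds 0) := by
    have hb : Tendsto (fun n : ℕ => ((n:ℝ)^q)⁻¹) atTop (nhds 0) := by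
      apply Tendsto.inv_tendsto_atTop
      exact (tendsto_pow_atTop (show q ≠ 0 by omega)).comp tendsto_natCast_atTop_atTop
    simpa [div_eq_mul_inv] using hb.const_mul (a 0)
  have hfin := (h0.add ha0).add (tendsto_const_nhds (x := α / (q:ℝ)))
  rw [zero_add, zero_add] at hfin
  apply hfin.congr'
  filter_upwards [Filter.eventually_ge_atTop 1] with n hn
  have hn0 : (n : ℝ) ^ q ≠ 0 := by
    have : (0:ℝ) < n := by exact_mod_cast hn
    positivity
  rw [sub_div, sub_div, mul_div_assoc, div_self hn0, mul_one]
  ring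

noncomputable def Lval (c3 : ℝ) (p : ℕ) : ℝ :=
  if Even p then (Nat.doubleFactorial (p - 1) : ℝ)
  else ((p / 2 : ℕ) : ℝ) * p * (Nat.doubleFactorial (p - 2) : ℝ) / 3 * c3

lemma Lval_even (c3 : ℝ) {p : ℕ} (hp : Even p) :
    Lval c3 p = (Nat.doubleFactorial (p - 1) : ℝ) := if_pos hp

lemma Lval_odd (c3 : ℝ) {p : ℕ} (hp : ¬ Even p) :
    Lval c3 p = ((p / 2 : ℕ) : ℝ) * p * (Nat.doubleFactorial (p - 2) : ℝ) / 3 * c3 := if_neg hp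

lemma choose2_even (t : ℕ) (ht : 1 ≤ t) : (2*t).choose 2 = t*(2*t-1) := by
  obtain ⟨s, rfl⟩ : ∃ s, t = s + 1 := ⟨t - 1, by omega⟩
  rw [show 2*(s+1) = 2*s+2 by omega, Nat.choose_two_right,
    show 2*s+2-1 = 2*s+1 by omega,
    show (2*s+2)*(2*s+1) = 2*((s+1)*(2*s+1)) by ring]
  exact Nat.mul_div_cancel_left _ (by norm_num)

lemma choose2_odd (t : ℕ) : (2*t+1).choose 2 = t*(2*t+1) := by
  rw [Nat.choose_two_right, show (2*t+1) - 1 = 2*t by omega,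
    show (2*t+1)*(2*t) = 2*(t*(2*t+1)) by ring]
  exact Nat.mul_div_cancel_left _ (by norm_num)

lemma choose3_odd (t : ℕ) (ht : 1 ≤ t) :
    ((2*t+1).choose 3 : ℝ) = (t:ℝ)*(2*(t:ℝ)+1)*(2*(t:ℝ)-1)/3 := by
  have h := Nat.descFactorial_eq_factorial_mul_choose (2*t+1) 3
  have h2 : (2*t+1).descFactorial 3 = (2*t-1)*(2*t)*(2*t+1) := by
    simp [Nat.descFactorial]
    ring
  rw [h2] at h
  have h3 : ((2*t-1)*(2*t)*(2*t+1) : ℕ) = (6 : ℕ) * ((2*t+1).choose 3) := by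
    rw [h]; norm_num [Nat.factorial]
  have h4 : ((2*t-1:ℕ):ℝ) * ((2*t:ℕ):ℝ) * ((2*t+1:ℕ):ℝ) = 6 * ((2*t+1).choose 3 : ℝ) := by
    exact_mod_cast congrArg (fun x : ℕ => (x : ℝ)) h3
  have hc : ((2*t-1:ℕ):ℝ) = 2*(t:ℝ)-1 := by
    push_cast [Nat.cast_sub (show 1 ≤ 2*t by omega)]; ring
  rw [hc] at h4
  push_cast at h4
  linarith

lemma df_odd_step (t : ℕ) (ht : 1 ≤ t) :
    ((2*t-1).doubleFactorial : ℝ) = (2*(t:ℝ)-1) * ((2*t-3).doubleFactorial : ℝ) := by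
  obtain ⟨s, rfl⟩ : ∃ s, t = s + 1 := ⟨t - 1, by omega⟩
  have h1 : 2*(s+1)-1 = 2*s+1 := by omega
  have h2 : 2*(s+1)-3 = 2*s-1 := by omega
  rw [h1, h2, Nat.doubleFactorial_add_one]
  push_cast
  ring

lemma df_even_id (t : ℕ) (ht : 1 ≤ t) :
    ((2*t).choose 2 * (2*t-3).doubleFactorial : ℕ) = t * (2*t-1).doubleFactorial := by
  rcases Nat.lt_or_ge t 2 with h | h
  · interval_cases t
    · decide
  · obtain ⟨s, rfl⟩ : ∃ s, t = s + 2 := ⟨t - 2, by omega⟩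
    rw [choose2_even _ (by omega)]
    have h1 : 2*(s+2)-1 = (2*s+1) + 2 := by omega
    have h2 : 2*(s+2)-3 = 2*s+1 := by omega
    rw [h1, h2, Nat.doubleFactorial_add_two]
    ring_nf

set_option maxHeartbeats 1000000 in
lemma Mlimit (c : ℕ → ℝ) (hc0 : c 0 = 1) (hc1 : c 1 = 0) (hc2 : c 2 = 1)
    (P : ℕ) (M : ℕ → ℕ → ℝ) (hM0 : ∀ p, M 0 p = if p = 0 then 1 else 0)
    (hrec : ∀ n p, p ≤ P →
      M (n + 1) p = ∑ j ∈ range (p + 1), (p.choose j : ℝ) * c j * M n (p - j)) :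
    ∀ p ≤ P, Tendsto (fun n : ℕ => M n p / (n : ℝ) ^ (p / 2)) atTop (nhds (Lval (c 3) p)) := by
  intro p
  induction p using Nat.strong_induction_on with
  | _ p ih =>
  intro hpP
  by_cases hp0 : p = 0
  · subst hp0
    have hall : ∀ n, M n 0 = 1 := by
      intro n
      induction n with
      | zero => simp [hM0]
      | succ n ihn => rw [hrec n 0 (by omega)]; simp [hc0, ihn]
    simp only [hall, Nat.zero_div, pow_zero, div_one]
    have : Lval (c 3) 0 = 1 := by
      rw [Lval_even _ (by decide)]; norm_num [Nat.doubleFactorial]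
    rw [this]
    exact tendsto_const_nhds
  by_cases hp1 : p = 1
  · subst hp1
    have hall : ∀ n, M n 1 = 0 := by
      intro n
      induction n with
      | zero => simp [hM0]
      | succ n ihn => rw [hrec n 1 (by omega)]; simp [Finset.sum_range_succ, hc1, hc0, ihn]
    simp only [hall]
    have : Lval (c 3) 1 = 0 := by
      rw [Lval_odd _ (by decide)]; norm_num
    rw [this]
    simpa using tendsto_const_nhds
  -- main case : p ≥ 2
  have hp2 : 2 ≤ p := by omega
  set q : ℕ := p / 2 with hqdef
  have hq : 1 ≤ q := by omega
  -- difference formula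
  have hD : ∀ n, M (n + 1) p - M n p
      = ∑ j ∈ Ico 2 (p + 1), (p.choose j : ℝ) * c j * M n (p - j) := by
    intro n
    rw [hrec n p hpP, range_eq_Ico,
      Finset.sum_eq_sum_Ico_succ_bot (by omega : 0 < p + 1),
      Finset.sum_eq_sum_Ico_succ_bot (by omega : 1 < p + 1)]
    simp [hc0, hc1]
  -- the limit function per term
  set F : ℕ → ℝ := fun j => (p.choose j : ℝ) * c j *
    (Lval (c 3) (p - j) * (0 : ℝ) ^ (q - 1 - (p - j) / 2)) with hFdef
  have hterm : ∀ j ∈ Ico 2 (p + 1),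
      Tendsto (fun n : ℕ => ((p.choose j : ℝ) * c j * M n (p - j)) / (n : ℝ) ^ (q - 1))
        atTop (nhds (F j)) := by
    intro j hj
    simp only [Finset.mem_Ico] at hj
    have hlt : p - j < p := by omega
    have hle : p - j ≤ P := by omega
    have h1 := ih _ hlt hle
    have hsplit : (p - j) / 2 + (q - 1 - (p - j) / 2) = q - 1 := by omega
    have h2 := aux_pow_div ((p - j) / 2) (q - 1 - (p - j) / 2)
    rw [hsplit] at h2
    have h3 := (h1.mul h2).const_mul ((p.choose j : ℝ) * c j)
    apply h3.congr'
    filter_upwards [Filter.eventually_ge_atTop 1] with n hn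
    have hn0 : (n : ℝ) ≠ 0 := by positivity
    have hr0 : (n : ℝ) ^ ((p - j) / 2) ≠ 0 := by positivity
    field_simp
  have hΔ : Tendsto (fun n : ℕ => (M (n + 1) p - M n p) / (n : ℝ) ^ (q - 1)) atTop
      (nhds (∑ j ∈ Ico 2 (p + 1), F j)) := by
    have := tendsto_finset_sum (Ico 2 (p + 1)) hterm
    apply this.congr
    intro n
    rw [hD n, Finset.sum_div]
  have hSC := stolz (a := fun n => M n p) hq hΔ
  -- it remains to identify the limit
  have hgoal : (∑ j ∈ Ico 2 (p + 1), F j) / (q : ℝ) = Lval (c 3) p := by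
    rcases Nat.even_or_odd p with he | ho
    · -- p even, p = 2*t
      obtain ⟨t, ht⟩ : ∃ t, p = 2 * t := by
        obtain ⟨t, ht⟩ := he; exact ⟨t, by omega⟩
      have ht1 : 1 ≤ t := by omega
      have hqt : q = t := by omega
      have hsum : (∑ j ∈ Ico 2 (p + 1), F j) = F 2 := by
        apply Finset.sum_eq_single_of_mem 2 (by simp [Finset.mem_Ico]; omega)
        intro j hj hne
        simp only [Finset.mem_Ico] at hj
        have hd : q - 1 - (p - j) / 2 ≠ 0 := by omega
        simp only [hFdef]
        rw [zero_pow hd, mul_zero, mul_zero]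
      rw [hsum]
      simp only [hFdef]
      have hd2 : q - 1 - (p - 2) / 2 = 0 := by omega
      simp only [hd2, pow_zero, mul_one, hc2]
      have heven2 : Even (p - 2) := ⟨t - 1, by omega⟩
      rw [Lval_even _ heven2, Lval_even _ he, hqt, ht]
      rw [div_eq_iff (show (t:ℝ) ≠ 0 by positivity)]
      have hid : ((2*t).choose 2 * (2*t-2-1).doubleFactorial : ℕ)
          = (2*t-1).doubleFactorial * t := by
        rw [show 2*t-2-1 = 2*t-3 by omega, df_even_id t ht1]; ring
      exact_mod_cast hid
    · -- p odd, p = 2*t+1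
      obtain ⟨t, ht⟩ := ho
      have ht1 : 1 ≤ t := by omega
      have hqt : q = t := by omega
      have hsum : (∑ j ∈ Ico 2 (p + 1), F j) = F 2 + F 3 := by
        rw [Finset.sum_eq_sum_Ico_succ_bot (show 2 < p + 1 by omega),
          Finset.sum_eq_sum_Ico_succ_bot (show 3 < p + 1 by omega)]
        have hrest : ∑ j ∈ Ico 4 (p + 1), F j = 0 := by
          apply Finset.sum_eq_zero
          intro j hj
          simp only [Finset.mem_Ico] at hj
          have hd : q - 1 - (p - j) / 2 ≠ 0 := by omega
          simp only [hFdef]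
          rw [zero_pow hd, mul_zero, mul_zero]
        rw [hrest, add_zero]
      rw [hsum]
      simp only [hFdef]
      have hd2 : q - 1 - (p - 2) / 2 = 0 := by omega
      have hd3 : q - 1 - (p - 3) / 2 = 0 := by omega
      simp only [hd2, hd3, pow_zero, mul_one, hc2]
      have hnotevenp : ¬ Even p := by
        rw [Nat.even_iff]; omega
      have hnoteven2 : ¬ Even (p - 2) := by
        rw [Nat.even_iff]; omega
      have heven3 : Even (p - 3) := ⟨t - 1, by omega⟩
      rw [Lval_odd _ hnoteven2, Lval_even _ heven3, Lval_odd _ hnotevenp]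
      -- cast rewrites
      have e1 : p.choose 2 = t * (2 * t + 1) := by rw [ht]; exact choose2_odd t
      have e2 : ((p.choose 3 : ℕ) : ℝ) = (t:ℝ)*(2*(t:ℝ)+1)*(2*(t:ℝ)-1)/3 := by
        rw [ht]; exact choose3_odd t ht1
      have e3 : (p - 2) / 2 = t - 1 := by omega
      have e4 : p - 2 - 2 = 2 * t - 3 := by omega
      have e5 : p - 3 - 1 = 2 * t - 3 := by omega
      have e6 : p / 2 = t := by omega
      have e7 : ((p - 2 : ℕ) : ℝ) = 2*(t:ℝ) - 1 := by
        rw [ht]; push_cast [Nat.cast_sub (show 1 ≤ 2*t by omega)]; ring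
      have e8 : ((p : ℕ) : ℝ) = 2*(t:ℝ) + 1 := by rw [ht]; push_cast; ring
      have e9 : ((t - 1 : ℕ) : ℝ) = (t:ℝ) - 1 := by
        push_cast [Nat.cast_sub ht1]; ring
      have e10 : (((2*t-1).doubleFactorial : ℕ) : ℝ)
          = (2*(t:ℝ)-1) * ((2*t-3).doubleFactorial : ℝ) := df_odd_step t ht1
      rw [e1, e2, e3, e4, e5, e6, e7, e8, e9, hqt]
      rw [show p - 2 = 2*t - 1 by omega, e10]
      push_cast
      have htR : ((t:ℝ)) ≠ 0 := by positivity
      field_simp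
      ring
  rw [← hgoal]
  exact hSC

lemma integrable_pow_of_memLp {Ω : Type*} [MeasurableSpace Ω] {μ : Measure Ω}
    [IsProbabilityMeasure μ] {f : Ω → ℝ} {N : ℕ} (hN : N ≠ 0)
    (hf : MemLp f (N : ℝ≥0∞) μ) {r : ℕ} (hr : r ≤ N) :
    Integrable (fun ω => f ω ^ r) μ := by
  have h1 : Integrable (fun ω => ‖f ω‖ ^ ((N : ℝ≥0∞)).toReal) μ :=
    hf.integrable_norm_rpow (by exact_mod_cast Nat.cast_ne_zero.mpr hN) (by simp)
  rw [ENNReal.toReal_natCast] at h1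
  have h2 : Integrable (fun ω => |f ω| ^ N) μ := by
    simpa [Real.rpow_natCast, Real.norm_eq_abs] using h1
  have hb : Integrable (fun ω => |f ω| ^ N + 1) μ := h2.add (integrable_const 1)
  apply hb.mono' ((hf.aestronglyMeasurable.aemeasurable.pow_const r).aestronglyMeasurable)
  filter_upwards with ω
  rw [Real.norm_eq_abs, abs_pow]
  rcases le_total (|f ω|) 1 with h | h
  · have h3 : |f ω| ^ r ≤ 1 := pow_le_one₀ (abs_nonneg _) h
    have h4 : (0:ℝ) ≤ |f ω| ^ N := pow_nonneg (abs_nonneg _) N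
    linarith
  · have h3 : |f ω| ^ r ≤ |f ω| ^ N := pow_le_pow_right₀ h hr
    linarith


set_option maxHeartbeats 1000000 in
/-- Rate of convergence of odd moments in the CLT: for i.i.d. `Yᵢ` with
mean `μ`, variance `σ² > 0` and `E|Y|^{2k+1} < ∞`,
`√n · E[Zₙ^{2k+1}] → k(2k+1)(2k-1)!! μ₃ / (3σ³)`. -/
theorem odd_moment_rate_clt
    {Ω : Type*} [MeasurableSpace Ω] (μ : Measure Ω) [IsProbabilityMeasure μ]
    (Y : ℕ → Ω → ℝ) (hmeas : ∀ i, Measurable (Y i))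
    (hindep : iIndepFun Y μ)
    (hident : ∀ i j, IdentDistrib (Y i) (Y j) μ μ)
    (m : ℝ) (hm : ∀ i, ∫ ω, Y i ω ∂μ = m)
    (σ : ℝ) (hσ : 0 < σ) (hvar : ∀ i, ∫ ω, (Y i ω - m) ^ 2 ∂μ = σ ^ 2)
    (k : ℕ) (hk : 1 ≤ k) (hLp : ∀ i, MemLp (Y i) (2 * k + 1) μ)
    (μ₃ : ℝ) (hμ₃ : ∫ ω, (Y 0 ω - m) ^ 3 ∂μ = μ₃)
    (Z : ℕ → Ω → ℝ)
    (hZ : ∀ n ω, Z n ω =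
      Real.sqrt n * ((n : ℝ)⁻¹ * ∑ i ∈ Finset.range n, Y i ω - m) / σ) :
    Tendsto (fun n : ℕ => Real.sqrt n * ∫ ω, Z n ω ^ (2 * k + 1) ∂μ)
      atTop (nhds ((k : ℝ) * (2 * (k : ℝ) + 1) * (Nat.doubleFactorial (2 * k - 1) : ℝ) *
        μ₃ / (3 * σ ^ 3))) := by
  have hσ0 : σ ≠ 0 := hσ.ne'
  set p : ℕ := 2 * k + 1 with hpdef
  have hp0 : p ≠ 0 := by omega
  -- normalized variables
  set X : ℕ → Ω → ℝ := fun i ω => σ⁻¹ * (Y i ω - m) with hXdef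
  have hXmeas : ∀ i, Measurable (X i) :=
    fun i => measurable_const.mul ((hmeas i).sub measurable_const)
  have hXindep : iIndepFun X μ := by
    exact hindep.comp (fun _ (x : ℝ) => σ⁻¹ * (x - m))
      (fun _ => measurable_const.mul (measurable_id.sub measurable_const))
  have hXident : ∀ i, IdentDistrib (X i) (X 0) μ μ :=
    fun i => (hident i 0).comp (measurable_const.mul (measurable_id.sub measurable_const))
  have hYLp : ∀ i, MemLp (Y i) ((p : ℕ) : ℝ≥0∞) μ := by
    intro i
    have hcast : ((p : ℕ) : ℝ≥0∞) = 2 * (k : ℝ≥0∞) + 1 := by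
      rw [hpdef]; push_cast; ring
    rw [hcast]; exact hLp i
  have hXLp : ∀ i, MemLp (X i) ((p : ℕ) : ℝ≥0∞) μ :=
    fun i => ((hYLp i).sub (memLp_const m)).const_mul σ⁻¹
  have hYint : ∀ i, Integrable (Y i) μ :=
    fun i => (hYLp i).integrable (by exact_mod_cast (show (1:ℕ) ≤ p by omega))
  -- moments
  set c : ℕ → ℝ := fun j => ∫ ω, X 0 ω ^ j ∂μ with hcdef
  have hmom : ∀ i j, ∫ ω, X i ω ^ j ∂μ = c j :=
    fun i j => ((hXident i).comp (measurable_id.pow_const j)).integral_eq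
  have hXint_pow : ∀ i j, j ≤ p → Integrable (fun ω => X i ω ^ j) μ :=
    fun i j hj => integrable_pow_of_memLp hp0 (hXLp i) hj
  have hc0 : c 0 = 1 := by simp [hcdef]
  have hc1 : c 1 = 0 := by
    simp only [hcdef, pow_one, hXdef]
    rw [integral_const_mul, integral_sub (hYint 0) (integrable_const m), hm 0, integral_const]
    simp
  have hc2 : c 2 = 1 := by
    simp only [hcdef, hXdef, mul_pow]
    rw [integral_const_mul, hvar 0]
    field_simp
  have hc3 : c 3 = μ₃ / σ ^ 3 := by
    simp only [hcdef, hXdef, mul_pow]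
    rw [integral_const_mul, hμ₃]
    field_simp
  -- partial sums
  set S : ℕ → Ω → ℝ := fun n ω => ∑ i ∈ Finset.range n, X i ω with hSdef
  have hS_eq : ∀ n, S n = ∑ i ∈ Finset.range n, X i := by
    intro n; funext ω; simp [hSdef]
  have hSLp : ∀ n, MemLp (S n) ((p : ℕ) : ℝ≥0∞) μ := by
    intro n; rw [hS_eq]
    exact memLp_finset_sum' _ (fun i _ => hXLp i)
  have hSint_pow : ∀ n j, j ≤ p → Integrable (fun ω => S n ω ^ j) μ :=
    fun n j hj => integrable_pow_of_memLp hp0 (hSLp n) hj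
  set Mo : ℕ → ℕ → ℝ := fun n r => ∫ ω, S n ω ^ r ∂μ with hModef
  have hM0 : ∀ r, Mo 0 r = if r = 0 then 1 else 0 := by
    intro r
    simp only [hModef, hSdef, Finset.range_zero, Finset.sum_empty]
    rcases Nat.eq_zero_or_pos r with hr | hr
    · simp [hr]
    · rw [if_neg (by omega)]
      simp [zero_pow (by omega : r ≠ 0)]
  -- the recursion
  have hXS : ∀ n, IndepFun (X n) (S n) μ := by
    intro n
    rw [hS_eq]
    exact (hXindep.indepFun_sum_range_succ hXmeas n).symm
  have hrec : ∀ n r, r ≤ p →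
      Mo (n + 1) r = ∑ j ∈ Finset.range (r + 1), (r.choose j : ℝ) * c j * Mo n (r - j) := by
    intro n r hr
    have hSX : ∀ ω, S (n + 1) ω = X n ω + S n ω := by
      intro ω; simp only [hSdef]; rw [Finset.sum_range_succ]; ring
    have hindep_pow : ∀ j l, IndepFun (fun ω => X n ω ^ j) (fun ω => S n ω ^ l) μ :=
      fun j l => (hXS n).comp (measurable_id.pow_const j) (measurable_id.pow_const l)
    have hprod_int : ∀ j, j ∈ Finset.range (r + 1) →
        Integrable (fun ω => X n ω ^ j * S n ω ^ (r - j) * (r.choose j : ℝ)) μ := by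
      intro j hj
      simp only [Finset.mem_range] at hj
      have h1 : Integrable (fun ω => X n ω ^ j * S n ω ^ (r - j)) μ := by
        have := (hindep_pow j (r - j)).integrable_mul
          (hXint_pow n j (by omega)) (hSint_pow n (r - j) (by omega))
        exact this
      exact h1.mul_const _
    calc Mo (n + 1) r
        = ∫ ω, ∑ j ∈ Finset.range (r + 1),
            X n ω ^ j * S n ω ^ (r - j) * (r.choose j : ℝ) ∂μ := by
          simp only [hModef]
          apply integral_congr_ae
          filter_upwards with ω
          rw [hSX ω, add_pow]
      _ = ∑ j ∈ Finset.range (r + 1),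
            ∫ ω, X n ω ^ j * S n ω ^ (r - j) * (r.choose j : ℝ) ∂μ :=
          integral_finset_sum _ hprod_int
      _ = ∑ j ∈ Finset.range (r + 1), (r.choose j : ℝ) * c j * Mo n (r - j) := by
          apply Finset.sum_congr rfl
          intro j hj
          simp only [Finset.mem_range] at hj
          rw [integral_mul_const]
          have hmul := (hindep_pow j (r - j)).integral_fun_mul_eq_mul_integral
            (hXint_pow n j (by omega)).aestronglyMeasurable
            (hSint_pow n (r - j) (by omega)).aestronglyMeasurable
          have hmul' : ∫ ω, X n ω ^ j * S n ω ^ (r - j) ∂μ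
              = (∫ ω, X n ω ^ j ∂μ) * ∫ ω, S n ω ^ (r - j) ∂μ := hmul
          rw [hmul', hmom n j]
          simp only [hModef]
          ring
  -- apply the combinatorial limit lemma
  have hlim := Mlimit c hc0 hc1 hc2 p Mo hM0 hrec p le_rfl
  have hp2k : p / 2 = k := by omega
  have hLv : Lval (c 3) p = (k : ℝ) * (2 * (k : ℝ) + 1) *
      (Nat.doubleFactorial (2 * k - 1) : ℝ) * μ₃ / (3 * σ ^ 3) := by
    rw [Lval_odd _ (by rw [Nat.even_iff]; omega), hc3, hp2k]
    rw [show p - 2 = 2 * k - 1 by omega]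
    rw [show ((p : ℕ) : ℝ) = 2 * (k : ℝ) + 1 by rw [hpdef]; push_cast; ring]
    field_simp
  rw [hp2k, hLv] at hlim
  apply hlim.congr'
  filter_upwards [Filter.eventually_ge_atTop 1] with n hn
  have hnR : (0 : ℝ) < n := by exact_mod_cast hn
  have hs0 : Real.sqrt n ≠ 0 := (Real.sqrt_pos.mpr hnR).ne'
  have hsq : Real.sqrt n * Real.sqrt n = (n : ℝ) := Real.mul_self_sqrt hnR.le
  have hZeq : ∀ ω, Z n ω = (Real.sqrt n)⁻¹ * S n ω := by
    intro ω
    rw [hZ n ω]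
    have h1 : (n : ℝ)⁻¹ * ∑ i ∈ Finset.range n, Y i ω - m
        = (n : ℝ)⁻¹ * ∑ i ∈ Finset.range n, (Y i ω - m) := by
      rw [Finset.sum_sub_distrib, mul_sub, Finset.sum_const, Finset.card_range,
        nsmul_eq_mul]
      field_simp
    have h2 : S n ω = σ⁻¹ * ∑ i ∈ Finset.range n, (Y i ω - m) := by
      simp only [hSdef, hXdef]
      rw [Finset.mul_sum]
    rw [h1, h2]
    field_simp
    rw [sq, hsq]
  have hint : ∫ ω, Z n ω ^ p ∂μ = ((Real.sqrt n)⁻¹) ^ p * Mo n p := by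
    simp only [hModef]
    rw [← integral_const_mul]
    apply integral_congr_ae
    filter_upwards with ω
    rw [hZeq ω, mul_pow]
  have hfac : Real.sqrt n * ((Real.sqrt n)⁻¹) ^ p = ((n : ℝ) ^ k)⁻¹ := by
    rw [hpdef, pow_succ, pow_mul]
    rw [show ((Real.sqrt n)⁻¹) ^ 2 = ((n : ℝ))⁻¹ by rw [inv_pow, sq, hsq]]
    rw [inv_pow]
    field_simp
  have : Real.sqrt n * ∫ ω, Z n ω ^ (2 * k + 1) ∂μ = Mo n p / (n : ℝ) ^ k := by
    rw [show (2 * k + 1) = p from rfl, hint, ← mul_assoc, hfac]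
    rw [div_eq_inv_mul]
  rw [this]
end

section
/- Consider the one-parameter model Yᵢ = (1+βᵢ)^{1/2}μ + εᵢ with i.i.d. errors of mean 0 and variance σ², where βᵢ = i·αᵢ^{-1/2} - (i-1)·α_{i-1}^{-1/2} for a positive increasing sequence αₙ → ∞ with n⁻¹αₙ decreasing to 0. Then the OLS estimator μ̂ satisfies: (1/n)XᵀX = 1 + αₙ^{-1/2} → 1, ξₙ = √n(μ̂-μ) has E[ξₙ²] = σ²/(1+αₙ^{-1/2}), and αₙ(E[ξₙ²] - σ²) = -σ²·αₙ^{1/2}/(1+αₙ^{-1/2}) → -∞ as n → ∞. -/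
open MeasureTheory ProbabilityTheory Filter

/-- The counterexample model `Yᵢ = (1+βᵢ)^{1/2}μ + εᵢ` with
`βᵢ = i·αᵢ^{-1/2} - (i-1)·α_{i-1}^{-1/2}`: one has
`(1/n)XᵀX = 1 + αₙ^{-1/2} → 1`, `E[ξₙ²] = σ²/(1+αₙ^{-1/2})` for
`ξₙ = √n(μ̂ₙ - μ)`, and `αₙ(E[ξₙ²] - σ²) → -∞`. -/
theorem slow_second_moment_counterexample
    {Ω : Type*} [MeasurableSpace Ω] (μ : Measure Ω) [IsProbabilityMeasure μ]
    (α : ℕ → ℝ) (hαpos : ∀ n, 0 < α n) (hαmono : StrictMono α)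
    (hαtop : Tendsto α atTop atTop)
    (hαanti : StrictAntiOn (fun n : ℕ => α n / n) (Set.Ici 1))
    (hαzero : Tendsto (fun n : ℕ => α n / n) atTop (nhds 0))
    (β : ℕ → ℝ)
    (hβ : ∀ i : ℕ, 1 ≤ i →
      β i = i / Real.sqrt (α i) - (i - 1 : ℕ) / Real.sqrt (α (i - 1)))
    (x : ℕ → ℝ) (hx : ∀ i : ℕ, 1 ≤ i → x i = Real.sqrt (1 + β i))
    (ε : ℕ → Ω → ℝ) (hmeas : ∀ i, Measurable (ε i))
    (hindep : iIndepFun ε μ)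
    (hident : ∀ i j, IdentDistrib (ε i) (ε j) μ μ)
    (hL2 : ∀ i, MemLp (ε i) 2 μ)
    (hmean : ∀ i, ∫ ω, ε i ω ∂μ = 0)
    (σ : ℝ) (hσ : 0 < σ) (hvar : ∀ i, ∫ ω, (ε i ω) ^ 2 ∂μ = σ ^ 2)
    (m : ℝ) (Y : ℕ → Ω → ℝ) (hY : ∀ i ω, Y i ω = x i * m + ε i ω)
    (muhat : ℕ → Ω → ℝ)
    (hmuhat : ∀ n ω, muhat n ω =
      (∑ i ∈ Finset.Icc 1 n, x i * Y i ω) / (∑ i ∈ Finset.Icc 1 n, x i ^ 2))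
    (ξ : ℕ → Ω → ℝ) (hξ : ∀ n ω, ξ n ω = Real.sqrt n * (muhat n ω - m)) :
    (∀ n : ℕ, 1 ≤ n →
      (n : ℝ)⁻¹ * ∑ i ∈ Finset.Icc 1 n, x i ^ 2 = 1 + 1 / Real.sqrt (α n)) ∧
    (∀ n : ℕ, 1 ≤ n →
      ∫ ω, (ξ n ω) ^ 2 ∂μ = σ ^ 2 / (1 + 1 / Real.sqrt (α n))) ∧
    Tendsto (fun n : ℕ => α n * ((∫ ω, (ξ n ω) ^ 2 ∂μ) - σ ^ 2)) atTop atBot := by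
  have hsqrtpos : ∀ n, 0 < Real.sqrt (α n) := fun n => Real.sqrt_pos.2 (hαpos n)
  -- monotonicity of j ↦ j/√(α j)
  have hkey : ∀ j : ℕ, 1 ≤ j →
      (j : ℝ) / Real.sqrt (α j) ≤ ((j + 1 : ℕ) : ℝ) / Real.sqrt (α (j + 1)) := by
    intro j hj
    have hj1 : (1 : ℝ) ≤ (j : ℝ) := by exact_mod_cast hj
    have h1 := hαanti (Set.mem_Ici.2 hj)
      (Set.mem_Ici.2 (le_trans hj (Nat.le_succ j))) (Nat.lt_succ_self j)
    simp only at h1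
    have hapos : 0 < Real.sqrt (α j) := hsqrtpos j
    have hbpos : 0 < Real.sqrt (α (j + 1)) := hsqrtpos (j + 1)
    have ha2 : Real.sqrt (α j) ^ 2 = α j := Real.sq_sqrt (hαpos j).le
    have hb2 : Real.sqrt (α (j + 1)) ^ 2 = α (j + 1) := Real.sq_sqrt (hαpos (j + 1)).le
    rw [div_le_div_iff₀ hapos hbpos]
    set a := Real.sqrt (α j)
    set b := Real.sqrt (α (j + 1))
    push_cast at h1 ⊢
    have h2 : b ^ 2 * (j : ℝ) < a ^ 2 * ((j : ℝ) + 1) := by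
      rw [ha2, hb2]
      have := (div_lt_div_iff₀ (by linarith) (by linarith)).1 h1
      linarith
    have h3 : ((j : ℝ) * b) ^ 2 < (((j : ℝ) + 1) * a) ^ 2 := by nlinarith
    have := lt_of_pow_lt_pow_left₀ 2 (by positivity) h3
    linarith
  have hβpos : ∀ i : ℕ, 1 ≤ i → 0 ≤ β i := by
    intro i hi
    rw [hβ i hi, sub_nonneg]
    obtain ⟨j, rfl⟩ : ∃ j, i = j + 1 := ⟨i - 1, (Nat.succ_pred_eq_of_pos hi).symm⟩
    simp only [Nat.add_sub_cancel]
    cases j with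
    | zero => simp [le_div_iff₀ (hsqrtpos 1), Real.sqrt_nonneg]
    | succ k => exact hkey (k + 1) (Nat.le_add_left 1 k)
  have hx2 : ∀ i : ℕ, 1 ≤ i → x i ^ 2 = 1 + β i := fun i hi => by
    rw [hx i hi, Real.sq_sqrt (by linarith [hβpos i hi])]
  have hβsum : ∀ n : ℕ, ∑ i ∈ Finset.Icc 1 n, β i = n / Real.sqrt (α n) := by
    intro n
    induction n with
    | zero => simp
    | succ k ih =>
      rw [Finset.sum_Icc_succ_top (Nat.le_add_left 1 k), ih,
        hβ (k + 1) (Nat.le_add_left 1 k)]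
      simp only [Nat.add_sub_cancel]
      ring
  have hS : ∀ n : ℕ, 1 ≤ n →
      ∑ i ∈ Finset.Icc 1 n, x i ^ 2 = n * (1 + 1 / Real.sqrt (α n)) := by
    intro n hn
    have h1 : ∑ i ∈ Finset.Icc 1 n, x i ^ 2 = ∑ i ∈ Finset.Icc 1 n, (1 + β i) :=
      Finset.sum_congr rfl fun i hi => hx2 i (Finset.mem_Icc.1 hi).1
    rw [h1, Finset.sum_add_distrib, hβsum, Finset.sum_const, Nat.card_Icc,
      Nat.add_sub_cancel, nsmul_eq_mul, mul_one]
    ring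
  have part1 : ∀ n : ℕ, 1 ≤ n →
      (n : ℝ)⁻¹ * ∑ i ∈ Finset.Icc 1 n, x i ^ 2 = 1 + 1 / Real.sqrt (α n) := by
    intro n hn
    have hn0 : (n : ℝ) ≠ 0 := Nat.cast_ne_zero.2 (by omega)
    rw [hS n hn, ← mul_assoc, inv_mul_cancel₀ hn0, one_mul]
  have hint : ∀ i, Integrable (ε i) μ := fun i => (hL2 i).integrable one_le_two
  have part2 : ∀ n : ℕ, 1 ≤ n →
      ∫ ω, (ξ n ω) ^ 2 ∂μ = σ ^ 2 / (1 + 1 / Real.sqrt (α n)) := by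
    intro n hn
    have hnpos : (0 : ℝ) < n := by exact_mod_cast hn
    have hdpos : 0 < 1 + 1 / Real.sqrt (α n) := by positivity
    set S := ∑ i ∈ Finset.Icc 1 n, x i ^ 2 with hSdef
    have hSval : S = n * (1 + 1 / Real.sqrt (α n)) := hS n hn
    have hSpos : 0 < S := by rw [hSval]; positivity
    have hXY : ∀ ω, ∑ i ∈ Finset.Icc 1 n, x i * Y i ω
        = S * m + ∑ i ∈ Finset.Icc 1 n, x i * ε i ω := by
      intro ω
      calc ∑ i ∈ Finset.Icc 1 n, x i * Y i ω
          = ∑ i ∈ Finset.Icc 1 n, (x i ^ 2 * m + x i * ε i ω) :=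
            Finset.sum_congr rfl fun i _ => by rw [hY]; ring
        _ = S * m + ∑ i ∈ Finset.Icc 1 n, x i * ε i ω := by
            rw [Finset.sum_add_distrib, ← Finset.sum_mul]
    have hξeq : ∀ ω, ξ n ω
        = (Real.sqrt n / S) * ∑ i ∈ Finset.Icc 1 n, x i * ε i ω := by
      intro ω
      rw [hξ, hmuhat, hXY ω, ← hSdef]
      field_simp
      ring
    have hξsq : ∀ ω, (ξ n ω) ^ 2
        = ((n : ℝ) / S ^ 2) * (∑ i ∈ Finset.Icc 1 n, x i * ε i ω) ^ 2 := by
      intro ω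
      rw [hξeq ω, mul_pow, div_pow, Real.sq_sqrt (Nat.cast_nonneg n)]
    have hintij : ∀ i j : ℕ, Integrable (fun ω => ε i ω * ε j ω) μ := by
      intro i j
      rcases eq_or_ne i j with rfl | hij
      · simpa [pow_two] using (hL2 i).integrable_sq
      · exact (hindep.indepFun hij).integrable_mul (hint i) (hint j)
    have hIJ : ∀ i j : ℕ, i ≠ j → ∫ ω, ε i ω * ε j ω ∂μ = 0 := by
      intro i j hij
      have h := (hindep.indepFun hij).integral_mul_eq_mul_integral (hint i).aestronglyMeasurable (hint j).aestronglyMeasurable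
      simpa [Pi.mul_apply, hmean i, hmean j] using h
    have hII : ∀ i : ℕ, ∫ ω, ε i ω * ε i ω ∂μ = σ ^ 2 := by
      intro i
      simpa [pow_two] using hvar i
    have hTsq : ∫ ω, (∑ i ∈ Finset.Icc 1 n, x i * ε i ω) ^ 2 ∂μ = S * σ ^ 2 := by
      have hexp : ∀ ω, (∑ i ∈ Finset.Icc 1 n, x i * ε i ω) ^ 2
          = ∑ i ∈ Finset.Icc 1 n, ∑ j ∈ Finset.Icc 1 n,
              (x i * x j) * (ε i ω * ε j ω) := by
        intro ω
        rw [pow_two, Finset.sum_mul_sum]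
        exact Finset.sum_congr rfl fun i _ => Finset.sum_congr rfl fun j _ => by ring
      simp_rw [hexp]
      rw [integral_finset_sum _
        (fun i _ => integrable_finset_sum _ (fun j _ => (hintij i j).const_mul _))]
      have hinner : ∀ i ∈ Finset.Icc 1 n,
          ∫ ω, ∑ j ∈ Finset.Icc 1 n, (x i * x j) * (ε i ω * ε j ω) ∂μ
            = x i ^ 2 * σ ^ 2 := by
        intro i hi
        rw [integral_finset_sum _ (fun j _ => (hintij i j).const_mul _)]
        have hterm : ∀ j ∈ Finset.Icc 1 n,
            ∫ ω, (x i * x j) * (ε i ω * ε j ω) ∂μ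
              = (x i * x j) * ∫ ω, ε i ω * ε j ω ∂μ := fun j _ =>
          integral_const_mul _ _
        rw [Finset.sum_congr rfl hterm,
          Finset.sum_eq_single_of_mem i hi
            (fun j _ hji => by rw [hIJ i j (Ne.symm hji), mul_zero]),
          hII i]
        ring
      rw [Finset.sum_congr rfl hinner, ← Finset.sum_mul]
    calc ∫ ω, (ξ n ω) ^ 2 ∂μ
        = ∫ ω, ((n : ℝ) / S ^ 2) * (∑ i ∈ Finset.Icc 1 n, x i * ε i ω) ^ 2 ∂μ := by
          simp_rw [hξsq]
      _ = ((n : ℝ) / S ^ 2) * (S * σ ^ 2) := by rw [integral_const_mul, hTsq]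
      _ = σ ^ 2 / (1 + 1 / Real.sqrt (α n)) := by
          rw [hSval]
          field_simp
  refine ⟨part1, part2, ?_⟩
  have key2 : ∀ n : ℕ, 1 ≤ n → 1 ≤ α n →
      α n * ((∫ ω, (ξ n ω) ^ 2 ∂μ) - σ ^ 2) ≤ -(σ ^ 2 / 2) * Real.sqrt (α n) := by
    intro n hn hα1
    rw [part2 n hn]
    have hs : 0 < Real.sqrt (α n) := hsqrtpos n
    have hs1 : 1 ≤ Real.sqrt (α n) := by
      rw [show (1 : ℝ) = Real.sqrt 1 by simp]
      exact Real.sqrt_le_sqrt hα1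
    have hs2 : Real.sqrt (α n) ^ 2 = α n := Real.sq_sqrt (hαpos n).le
    set s := Real.sqrt (α n)
    have hd : (0 : ℝ) < 1 + 1 / s := by positivity
    rw [← hs2]
    have e : s ^ 2 * (σ ^ 2 / (1 + 1 / s) - σ ^ 2) = -(σ ^ 2 * s ^ 2 / (s + 1)) := by
      field_simp
      ring
    rw [e, neg_mul, neg_le_neg_iff]
    rw [le_div_iff₀ (show (0:ℝ) < s + 1 by linarith)]
    nlinarith [mul_nonneg (mul_nonneg (sq_nonneg σ) hs.le) (by linarith : (0:ℝ) ≤ s - 1)]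
  have h1 : Tendsto (fun n => Real.sqrt (α n)) atTop atTop := by
    rw [tendsto_atTop_atTop]
    intro b
    obtain ⟨N, hN⟩ := (tendsto_atTop_atTop.1 hαtop) (max 0 b ^ 2)
    refine ⟨N, fun n hn => le_trans (le_max_right 0 b) ?_⟩
    exact (Real.le_sqrt (le_max_left 0 b) (hαpos n).le).2 (hN n hn)
  have hg : Tendsto (fun n => -(σ ^ 2 / 2) * Real.sqrt (α n)) atTop atBot := by
    have h2 : Tendsto (fun n => (σ ^ 2 / 2) * Real.sqrt (α n)) atTop atTop :=
      h1.const_mul_atTop (by positivity)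
    have h3 := tendsto_neg_atTop_atBot.comp h2
    have : (fun n => -(σ ^ 2 / 2) * Real.sqrt (α n))
        = (fun z : ℝ => -z) ∘ (fun n => (σ ^ 2 / 2) * Real.sqrt (α n)) := by
      funext n; simp [Function.comp, neg_mul]
    rw [this]
    exact h3
  refine tendsto_atBot_mono' atTop ?_ hg
  filter_upwards [eventually_ge_atTop 1, hαtop.eventually_ge_atTop 1] with n hn hα1
  exact key2 n hn hα1
end
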